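/- The Korányi norm on the Heisenberg group satisfies the triangle inequality |x·y| ≤ |x| + |y| for all x, y ∈ ℍⁿ. -/

import Mathlib

/-- The Heisenberg group `ℍⁿ = ℂⁿ × ℝ` product. -/
noncomputable def Hmul {n : ℕ} (x y : (Fin n → ℂ) × ℝ) : (Fin n → ℂ) × ℝ :=
  (x.1 + y.1, x.2 + y.2 + (1 / 2) * (∑ j, x.1 j * (starRingEnd ℂ) (y.1 j)).im)

/-- The Korányi norm `|(z,t)| = (|z|⁴ + t²)^{1/4}`. -/
noncomputable def koranyiNorm {n : ℕ} (x : (Fin n → ℂ) × ℝ) : ℝ :=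
  ((∑ j, ‖x.1 j‖ ^ 2) ^ 2 + x.2 ^ 2) ^ ((1 : ℝ) / 4)

/-- The core analytic inequality behind the Korányi triangle inequality. -/
lemma koranyi_aux (a b t s p q : ℝ) (ha0 : 0 ≤ a) (hb0 : 0 ≤ b)
    (hcs : p ^ 2 + q ^ 2 ≤ a * b) :
    ((a + b + 2 * p) ^ 2 + (t + s + 1 / 2 * q) ^ 2) ^ ((1 : ℝ) / 4)
      ≤ (a ^ 2 + t ^ 2) ^ ((1 : ℝ) / 4) + (b ^ 2 + s ^ 2) ^ ((1 : ℝ) / 4) := by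
  set R := Real.sqrt (a ^ 2 + t ^ 2) with hR
  set S := Real.sqrt (b ^ 2 + s ^ 2) with hS
  set u := Real.sqrt R with hu
  set v := Real.sqrt S with hv
  have hR0 : 0 ≤ R := Real.sqrt_nonneg _
  have hS0 : 0 ≤ S := Real.sqrt_nonneg _
  have hu0 : 0 ≤ u := Real.sqrt_nonneg _
  have hv0 : 0 ≤ v := Real.sqrt_nonneg _
  have hR2 : R ^ 2 = a ^ 2 + t ^ 2 := Real.sq_sqrt (by positivity)
  have hS2 : S ^ 2 = b ^ 2 + s ^ 2 := Real.sq_sqrt (by positivity)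
  have hu2 : u ^ 2 = R := Real.sq_sqrt hR0
  have hv2 : v ^ 2 = S := Real.sq_sqrt hS0
  have haR : a ≤ R :=
    calc a = Real.sqrt (a ^ 2) := (Real.sqrt_sq ha0).symm
      _ ≤ R := Real.sqrt_le_sqrt (by nlinarith [sq_nonneg t])
  have hbS : b ≤ S :=
    calc b = Real.sqrt (b ^ 2) := (Real.sqrt_sq hb0).symm
      _ ≤ S := Real.sqrt_le_sqrt (by nlinarith [sq_nonneg s])
  set ζ : ℂ := ⟨a, t⟩ with hζ
  set ω : ℂ := ⟨b, s⟩ with hω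
  set d : ℂ := ⟨2 * p, q / 2⟩ with hd
  have habsζ : ‖ζ‖ = R := by
    rw [hζ, Complex.norm_def, Complex.normSq_mk, hR]; ring_nf
  have habsω : ‖ω‖ = S := by
    rw [hω, Complex.norm_def, Complex.normSq_mk, hS]; ring_nf
  have h4 : Real.sqrt 4 = 2 := by
    rw [show (4 : ℝ) = 2 ^ 2 by norm_num, Real.sqrt_sq (by norm_num : (0:ℝ) ≤ 2)]
  have hab_uv : Real.sqrt (a * b) ≤ u * v := by
    rw [hu, hv, ← Real.sqrt_mul hR0]
    exact Real.sqrt_le_sqrt (by nlinarith)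
  have habsd : ‖d‖ ≤ 2 * (u * v) := by
    rw [hd, Complex.norm_def, Complex.normSq_mk]
    calc Real.sqrt (2 * p * (2 * p) + q / 2 * (q / 2))
        ≤ Real.sqrt (4 * (a * b)) := Real.sqrt_le_sqrt (by nlinarith)
      _ = 2 * Real.sqrt (a * b) := by
          rw [Real.sqrt_mul (by norm_num : (0:ℝ) ≤ 4), h4]
      _ ≤ 2 * (u * v) := by linarith
  have hX : ((⟨a + b + 2 * p, t + s + 1 / 2 * q⟩ : ℂ)) = ζ + ω + d := by
    apply Complex.ext <;> simp [hζ, hω, hd] <;> ring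
  have htri : ‖(⟨a + b + 2 * p, t + s + 1 / 2 * q⟩ : ℂ)‖ ≤ (u + v) ^ 2 := by
    rw [hX]
    calc ‖ζ + ω + d‖ ≤ ‖ζ + ω‖ + ‖d‖ := norm_add_le _ _
      _ ≤ ‖ζ‖ + ‖ω‖ + ‖d‖ :=
          add_le_add_left (norm_add_le _ _) _
      _ ≤ R + S + 2 * (u * v) := by rw [habsζ, habsω]; linarith
      _ = (u + v) ^ 2 := by rw [← hu2, ← hv2]; ring
  have hN : (a + b + 2 * p) ^ 2 + (t + s + 1 / 2 * q) ^ 2 ≤ (u + v) ^ 4 := by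
    have habs2 : ‖(⟨a + b + 2 * p, t + s + 1 / 2 * q⟩ : ℂ)‖ ^ 2
        = (a + b + 2 * p) ^ 2 + (t + s + 1 / 2 * q) ^ 2 := by
      rw [Complex.sq_norm, Complex.normSq_mk]; ring
    have h := pow_le_pow_left₀ (norm_nonneg _) htri 2
    rw [habs2] at h
    calc (a + b + 2 * p) ^ 2 + (t + s + 1 / 2 * q) ^ 2 ≤ ((u + v) ^ 2) ^ 2 := h
      _ = (u + v) ^ 4 := by ring
  have hux : (a ^ 2 + t ^ 2) ^ ((1 : ℝ) / 4) = u := by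
    rw [hu, hR, show ((1 : ℝ) / 4) = (1 / 2) * (1 / 2) by norm_num,
      Real.rpow_mul (by positivity), ← Real.sqrt_eq_rpow, ← Real.sqrt_eq_rpow]
  have hvx : (b ^ 2 + s ^ 2) ^ ((1 : ℝ) / 4) = v := by
    rw [hv, hS, show ((1 : ℝ) / 4) = (1 / 2) * (1 / 2) by norm_num,
      Real.rpow_mul (by positivity), ← Real.sqrt_eq_rpow, ← Real.sqrt_eq_rpow]
  rw [hux, hvx]
  calc ((a + b + 2 * p) ^ 2 + (t + s + 1 / 2 * q) ^ 2) ^ ((1 : ℝ) / 4)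
      ≤ ((u + v) ^ 4) ^ ((1 : ℝ) / 4) :=
        Real.rpow_le_rpow (by positivity) hN (by norm_num)
    _ = u + v := by
        rw [← Real.rpow_natCast (u + v) 4, ← Real.rpow_mul (by positivity)]
        norm_num

/-- The Korányi norm satisfies the triangle inequality `|x·y| ≤ |x| + |y|`
on the Heisenberg group. -/
theorem stmt_17 {n : ℕ} (x y : (Fin n → ℂ) × ℝ) :
    koranyiNorm (Hmul x y) ≤ koranyiNorm x + koranyiNorm y := by
  obtain ⟨z, t⟩ := x
  obtain ⟨w, s⟩ := y
  have hsum : ∑ j, ‖z j + w j‖ ^ 2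
      = (∑ j, ‖z j‖ ^ 2) + (∑ j, ‖w j‖ ^ 2)
        + 2 * (∑ j, z j * (starRingEnd ℂ) (w j)).re := by
    simp only [Complex.sq_norm, Complex.normSq_add, Complex.re_sum,
      Finset.sum_add_distrib, Finset.mul_sum]
  set a := ∑ j, ‖z j‖ ^ 2 with ha
  set b := ∑ j, ‖w j‖ ^ 2 with hb
  set c := ∑ j, z j * (starRingEnd ℂ) (w j) with hc
  have ha0 : 0 ≤ a := Finset.sum_nonneg fun j _ => sq_nonneg _
  have hb0 : 0 ≤ b := Finset.sum_nonneg fun j _ => sq_nonneg _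
  have hcs : c.re ^ 2 + c.im ^ 2 ≤ a * b := by
    have h1 : ‖c‖ ≤ ∑ j, ‖z j‖ * ‖w j‖ := by
      calc ‖c‖ = ‖∑ j, z j * (starRingEnd ℂ) (w j)‖ := rfl
        _ ≤ ∑ j, ‖z j * (starRingEnd ℂ) (w j)‖ := norm_sum_le _ _
        _ = ∑ j, ‖z j‖ * ‖w j‖ := by
            simp [map_mul, Complex.norm_conj]
    have h2 : (∑ j, ‖z j‖ * ‖w j‖) ^ 2 ≤ a * b :=
      Finset.sum_mul_sq_le_sq_mul_sq _ _ _
    have h0 : 0 ≤ ∑ j, ‖z j‖ * ‖w j‖ :=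
      Finset.sum_nonneg fun j _ => mul_nonneg (norm_nonneg _) (norm_nonneg _)
    have h3 : ‖c‖ ^ 2 = c.re ^ 2 + c.im ^ 2 := by
      rw [Complex.sq_norm, Complex.normSq_apply]; ring
    nlinarith [norm_nonneg c]
  have hkor : koranyiNorm (Hmul (z, t) (w, s))
      = ((a + b + 2 * c.re) ^ 2 + (t + s + 1 / 2 * c.im) ^ 2) ^ ((1 : ℝ) / 4) := by
    simp only [koranyiNorm, Hmul, Pi.add_apply]
    rw [hsum]
  have hk1 : koranyiNorm ((z, t) : (Fin n → ℂ) × ℝ) = (a ^ 2 + t ^ 2) ^ ((1 : ℝ) / 4) := rfl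
  have hk2 : koranyiNorm ((w, s) : (Fin n → ℂ) × ℝ) = (b ^ 2 + s ^ 2) ^ ((1 : ℝ) / 4) := rfl
  rw [hkor, hk1, hk2]
  exact koranyi_aux a b t s c.re c.im ha0 hb0 hcs
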